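/- For every n ≥ 1 and every a ≥ 1, the number of cyclic permutations σ of [n+1] (permutations of [n+1] whose cycle decomposition consists of a single (n+1)-cycle) with exactly a cyclic ascents equals the number of permutations of [n] with exactly a-1 ascents; here an index i ∈ [n+1] is a cyclic ascent of σ if σ(i) > i. Equivalently, Σ_{σ ∈ C_{n+1}} x^{asc_c(σ)} y^{des_c(σ)} = Σ_{π ∈ S_n} x^{asc(π)+1} y^{des(π)+1} as polynomials, where des_c(σ) = #{i : σ(i) < i}. -/

import Mathlib

/-- The number of ascents of a permutation of `[n]`, viewing the permutation as the
word `π 0, π 1, …, π (n-1)`. -/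
def ascents {n : ℕ} (π : Equiv.Perm (Fin n)) : ℕ :=
  ((List.ofFn fun i => (π i : ℕ)).zip (List.ofFn fun i => (π i : ℕ)).tail).countP
    fun p => decide (p.1 < p.2)

namespace Stmt1Aux
open Equiv Equiv.Perm List

private lemma countP_ofFn {α : Type*} (p : α → Bool) :
    ∀ {k : ℕ} (g : Fin k → α), (List.ofFn g).countP p = ∑ j, if p (g j) then 1 else 0 := by
  intro k
  induction k with
  | zero => simp
  | succ k ih =>
    intro g
    rw [List.ofFn_succ, List.countP_cons, Fin.sum_univ_succ, ih]
    split <;> simp <;> omega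

lemma ascents_eq {m : ℕ} (π : Perm (Fin (m + 1))) :
    ascents π = ∑ j : Fin m, if π j.castSucc < π j.succ then 1 else 0 := by
  unfold ascents
  have h1 : (List.ofFn fun i => (π i : ℕ)).zip (List.ofFn fun i => (π i : ℕ)).tail
      = List.ofFn (fun j : Fin m => ((π j.castSucc : ℕ), (π j.succ : ℕ))) := by
    apply List.ext_getElem
    · simp
    · intro i h1 h2
      have hi : i < m := by simpa using h2
      rw [List.getElem_zip, List.getElem_tail, List.getElem_ofFn, List.getElem_ofFn,
        List.getElem_ofFn]
      have e1 : (⟨i, by omega⟩ : Fin (m + 1)) = (⟨i, hi⟩ : Fin m).castSucc := rfl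
      have e2 : (⟨i + 1, by omega⟩ : Fin (m + 1)) = (⟨i, hi⟩ : Fin m).succ := rfl
      rw [e1, e2]
  rw [h1, countP_ofFn]
  apply Finset.sum_congr rfl
  intro j _
  simp only [decide_eq_true_eq, Fin.lt_def]

variable {m : ℕ}

def wlist (π : Perm (Fin (m + 1))) : List (Fin (m + 2)) :=
  Fin.last (m + 1) :: List.ofFn (fun j => (π j).castSucc)

lemma length_wlist (π : Perm (Fin (m + 1))) : (wlist π).length = m + 2 := by simp [wlist]

lemma nodup_wlist (π : Perm (Fin (m + 1))) : (wlist π).Nodup := by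
  rw [wlist, List.nodup_cons]
  constructor
  · rw [List.mem_ofFn]
    rintro ⟨j, hj⟩
    exact absurd hj (Fin.castSucc_lt_last _).ne
  · rw [List.nodup_ofFn]
    exact fun a b h => π.injective (Fin.castSucc_injective _ h)

lemma wlist_zero (π : Perm (Fin (m + 1))) :
    (wlist π)[0]'(by rw [length_wlist]; omega) = Fin.last (m + 1) := rfl

lemma wlist_succ (π : Perm (Fin (m + 1))) (j : ℕ) (h : j < m + 1) :
    (wlist π)[j + 1]'(by rw [length_wlist]; omega) = (π ⟨j, h⟩).castSucc := by
  show (Fin.last (m + 1) :: List.ofFn (fun j => (π j).castSucc))[j + 1]'_ = _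
  exact (List.getElem_cons_succ _ _ _ _).trans (List.getElem_ofFn ..)

def F (π : Perm (Fin (m + 1))) : Perm (Fin (m + 2)) := (wlist π).formPerm

lemma F_pow (π : Perm (Fin (m + 1))) (k : ℕ) (hk : k < m + 2) :
    (F π ^ k) (Fin.last (m + 1)) = (wlist π)[k]'(by rw [length_wlist]; exact hk) := by
  have h := List.formPerm_pow_apply_getElem (wlist π) (nodup_wlist π) k 0
    (by rw [length_wlist]; omega)
  rw [wlist_zero] at h
  have hidx : (0 + k) % (wlist π).length = k := by rw [length_wlist, Nat.zero_add, Nat.mod_eq_of_lt hk]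
  simp only [hidx] at h
  exact h

lemma F_apply (π : Perm (Fin (m + 1))) (k : ℕ) (hk : k < m + 2) :
    F π ((wlist π)[k]'(by rw [length_wlist]; exact hk)) =
      (wlist π)[(k + 1) % (m + 2)]'(by rw [length_wlist]; exact Nat.mod_lt _ (by omega)) := by
  have h := List.formPerm_apply_getElem (wlist π) (nodup_wlist π) k
    (by rw [length_wlist]; exact hk)
  have hidx : (k + 1) % (wlist π).length = (k + 1) % (m + 2) := by rw [length_wlist]
  simp only [hidx] at h
  exact h

lemma F_injective : Function.Injective (F (m := m)) := by
  intro π₁ π₂ h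
  apply Equiv.ext
  intro j
  have h1 := F_pow π₁ ((j : ℕ) + 1) (by omega)
  have h2 := F_pow π₂ ((j : ℕ) + 1) (by omega)
  rw [h, h2] at h1
  rw [wlist_succ π₂ j j.isLt, wlist_succ π₁ j j.isLt] at h1
  have : π₂ ⟨(j : ℕ), j.isLt⟩ = π₁ ⟨(j : ℕ), j.isLt⟩ := Fin.castSucc_injective _ h1
  simpa [Fin.eta] using this.symm

lemma F_isCycle (π : Perm (Fin (m + 1))) : (F π).IsCycle :=
  List.isCycle_formPerm (nodup_wlist π) (by rw [length_wlist]; omega)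

lemma F_support (π : Perm (Fin (m + 1))) : (F π).support = Finset.univ := by
  rw [F, List.support_formPerm_of_nodup _ (nodup_wlist π) (fun x hx => by
    have := congrArg List.length hx
    rw [length_wlist] at this
    simp at this)]
  apply Finset.eq_univ_of_card
  rw [List.toFinset_card_of_nodup (nodup_wlist π), length_wlist, Fintype.card_fin]

lemma card_ascents (π : Perm (Fin (m + 1))) :
    Nat.card {i : Fin (m + 2) // i < F π i} = ascents π + 1 := by
  rw [ascents_eq, Nat.card_eq_fintype_card, Fintype.card_subtype, Finset.card_filter]
  have hg : Function.Bijective (fun k : Fin (m + 2) =>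
      (wlist π)[(k : ℕ)]'(by rw [length_wlist]; exact k.isLt)) := by
    rw [Fintype.bijective_iff_injective_and_card]
    exact ⟨fun a b hab => Fin.ext (((nodup_wlist π).getElem_inj_iff).mp hab), rfl⟩
  rw [← Function.Bijective.sum_comp hg (fun i => if i < F π i then 1 else 0)]
  have step : ∀ k : Fin (m + 2),
      (if (wlist π)[(k : ℕ)]'(by rw [length_wlist]; exact k.isLt) <
          F π ((wlist π)[(k : ℕ)]'(by rw [length_wlist]; exact k.isLt)) then (1 : ℕ) else 0) =
      (if (wlist π)[(k : ℕ)]'(by rw [length_wlist]; exact k.isLt) <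
          (wlist π)[((k : ℕ) + 1) % (m + 2)]'(by rw [length_wlist]; exact Nat.mod_lt _ (by omega)) then (1 : ℕ) else 0) :=
    fun k => by rw [F_apply π (k : ℕ) k.isLt]
  refine Eq.trans (Finset.sum_congr rfl (fun k _ => step k)) ?_
  rw [Fin.sum_univ_succ, Fin.sum_univ_castSucc]
  have h0 : (if (wlist π)[((0 : Fin (m + 2)) : ℕ)]'(by rw [length_wlist]; omega) <
      (wlist π)[(((0 : Fin (m + 2)) : ℕ) + 1) % (m + 2)]'(by rw [length_wlist]; exact Nat.mod_lt _ (by omega)) then (1 : ℕ) else 0) = 0 := by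
    simp only [Fin.val_zero]
    have e2 : (0 + 1) % (m + 2) = 0 + 1 := Nat.mod_eq_of_lt (by omega)
    simp only [e2]
    rw [wlist_zero, wlist_succ π 0 (by omega)]
    exact if_neg (Fin.castSucc_lt_last _).asymm
  have hc : ∀ j : Fin m,
      (if (wlist π)[((j.castSucc.succ : Fin (m + 2)) : ℕ)]'(by rw [length_wlist]; omega) <
        (wlist π)[(((j.castSucc.succ : Fin (m + 2)) : ℕ) + 1) % (m + 2)]'(by rw [length_wlist]; exact Nat.mod_lt _ (by omega)) then (1 : ℕ) else 0) =
      if π j.castSucc < π j.succ then 1 else 0 := by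
    intro j
    simp only [Fin.val_succ, Fin.coe_castSucc]
    have e2 : ((j : ℕ) + 1 + 1) % (m + 2) = (j : ℕ) + 1 + 1 := Nat.mod_eq_of_lt (by omega)
    simp only [e2]
    rw [wlist_succ π (j : ℕ) (by omega), wlist_succ π ((j : ℕ) + 1) (by omega)]
    have e3 : (⟨(j : ℕ), by omega⟩ : Fin (m + 1)) = j.castSucc := rfl
    have e4 : (⟨(j : ℕ) + 1, by omega⟩ : Fin (m + 1)) = j.succ := rfl
    rw [e3, e4]
    simp only [Fin.castSucc_lt_castSucc_iff]
  have hl : (if (wlist π)[(((Fin.last m).succ : Fin (m + 2)) : ℕ)]'(by rw [length_wlist]; omega) <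
      (wlist π)[((((Fin.last m).succ : Fin (m + 2)) : ℕ) + 1) % (m + 2)]'(by rw [length_wlist]; exact Nat.mod_lt _ (by omega)) then (1 : ℕ) else 0) = 1 := by
    simp only [Fin.val_succ, Fin.val_last]
    have e2 : (m + 1 + 1) % (m + 2) = 0 := Nat.mod_self _
    simp only [e2]
    rw [wlist_succ π m (by omega), wlist_zero]
    exact if_pos (Fin.castSucc_lt_last _)
  simp only [h0, hl, hc]
  omega

lemma F_surjective (σ : Perm (Fin (m + 2))) (hc : σ.IsCycle) (hs : σ.support = Finset.univ) :
    ∃ π : Perm (Fin (m + 1)), F π = σ := by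
  set top : Fin (m + 2) := Fin.last (m + 1) with htop
  have hmem : top ∈ σ.support := by rw [hs]; exact Finset.mem_univ _
  have hcy : σ.cycleOf top = σ := hc.cycleOf_eq (mem_support.mp hmem)
  have hlen : (σ.toList top).length = m + 2 := by
    rw [length_toList, hcy, hs, Finset.card_univ, Fintype.card_fin]
  have hget : ∀ (k : ℕ) (hk : k < m + 2),
      (σ.toList top)[k]'(by rw [hlen]; exact hk) = (σ ^ k) top := by
    intro k hk
    have := getElem_toList σ top k (by rw [hlen]; exact hk)
    simpa using this
  have hnd := nodup_toList σ top
  have hne : ∀ j : Fin (m + 1), (σ ^ ((j : ℕ) + 1)) top ≠ top := by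
    intro j h
    have h0 : (σ.toList top)[0]'(by rw [hlen]; omega) = top := by
      rw [hget 0 (by omega)]; simp
    have h1 : (σ.toList top)[(j : ℕ) + 1]'(by rw [hlen]; omega) = top := by
      rw [hget ((j : ℕ) + 1) (by omega)]; exact h
    have := hnd.getElem_inj_iff.mp (h1.trans h0.symm)
    omega
  set π₀ : Fin (m + 1) → Fin (m + 1) :=
    fun j => ((σ ^ ((j : ℕ) + 1)) top).castPred (hne j) with hπ₀
  have hinj : Function.Injective π₀ := by
    intro a b hab
    have h2 : (σ ^ ((a : ℕ) + 1)) top = (σ ^ ((b : ℕ) + 1)) top := by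
      have := congrArg Fin.castSucc hab
      simpa [hπ₀, Fin.castSucc_castPred] using this
    have ha : (σ.toList top)[(a : ℕ) + 1]'(by rw [hlen]; omega) =
        (σ.toList top)[(b : ℕ) + 1]'(by rw [hlen]; omega) := by
      rw [hget _ (by omega), hget _ (by omega)]; exact h2
    have := hnd.getElem_inj_iff.mp ha
    exact Fin.ext (by omega)
  refine ⟨Equiv.ofBijective π₀ (Finite.injective_iff_bijective.mp hinj), ?_⟩
  have hw : wlist (Equiv.ofBijective π₀ (Finite.injective_iff_bijective.mp hinj)) =
      σ.toList top := by
    apply List.ext_getElem (by rw [length_wlist, hlen])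
    intro i h1 h2
    rcases i with _ | j
    · rw [hget 0 (by rw [hlen] at h2; omega)]
      simp [wlist, htop]
    · have hj : j < m + 1 := by rw [length_wlist] at h1; omega
      rw [wlist_succ _ j hj, hget (j + 1) (by omega)]
      show (π₀ ⟨j, hj⟩).castSucc = _
      rw [hπ₀]
      exact Fin.castSucc_castPred _ _
  rw [F, hw, formPerm_toList, hcy]

end Stmt1Aux

theorem stmt1 (n a : ℕ) (hn : 1 ≤ n) (ha : 1 ≤ a) :
    Nat.card {σ : Equiv.Perm (Fin (n + 1)) //
        σ.IsCycle ∧ σ.support = Finset.univ ∧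
        Nat.card {i : Fin (n + 1) // i < σ i} = a} =
    Nat.card {π : Equiv.Perm (Fin n) // ascents π = a - 1} := by
  obtain ⟨m, rfl⟩ : ∃ m, n = m + 1 := ⟨n - 1, by omega⟩
  obtain ⟨b, rfl⟩ : ∃ b, a = b + 1 := ⟨a - 1, by omega⟩
  have hsub : b + 1 - 1 = b := rfl
  rw [hsub]
  apply Nat.card_congr
  apply Equiv.symm
  refine Equiv.ofBijective (fun π => ⟨Stmt1Aux.F π.1, Stmt1Aux.F_isCycle _,
    Stmt1Aux.F_support _, by rw [Stmt1Aux.card_ascents, π.2]⟩) ⟨?_, ?_⟩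
  · intro π₁ π₂ h
    exact Subtype.ext (Stmt1Aux.F_injective (congrArg Subtype.val h))
  · rintro ⟨σ, hc, hs, hcount⟩
    obtain ⟨π, rfl⟩ := Stmt1Aux.F_surjective σ hc hs
    rw [Stmt1Aux.card_ascents] at hcount
    exact ⟨⟨π, by omega⟩, rfl⟩
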